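/- For all integers n ≥ 2, p ≥ 1, α ≥ 0 and every α-almost supermagic edge labeling t of K_n, the p-robustness satisfies (n − 2p − 19)·p − α ≤ R(p,t,n) ≤ (2n − 4)·p + α (as integers). -/
import Mathlib


open Finset

namespace Swap

noncomputable section
open scoped Classical

def eps (n : ℕ) : ℕ := n * (n - 1) / 2

def incEdges (n : ℕ) (v : Fin n) : Finset (Sym2 (Fin n)) :=
  Finset.univ.filter fun e => v ∈ e ∧ ¬ e.IsDiag

def IsEdgeLabeling (n : ℕ) (t : Sym2 (Fin n) → ℕ) : Prop :=
  Set.BijOn t {e : Sym2 (Fin n) | ¬ e.IsDiag} (Set.Icc 1 (eps n))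

def labelSum (n : ℕ) (t : Sym2 (Fin n) → ℕ) (v : Fin n) : ℤ :=
  ∑ e ∈ incEdges n v, (t e : ℤ)

def labelSet (n : ℕ) (t : Sym2 (Fin n) → ℕ) (v : Fin n) : Finset ℕ :=
  (incEdges n v).image t

def AlmostSupermagic (n α : ℕ) (t : Sym2 (Fin n) → ℕ) : Prop :=
  IsEdgeLabeling n t ∧ ∀ u v : Fin n, |labelSum n t u - labelSum n t v| ≤ (α : ℤ)

def IsPSwap (n p : ℕ) (t t' : Sym2 (Fin n) → ℕ) : Prop :=
  IsEdgeLabeling n t' ∧ ∀ e : Sym2 (Fin n), ¬ e.IsDiag → |(t' e : ℤ) - (t e : ℤ)| ≤ (p : ℤ)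

def robustness (n p : ℕ) (t : Sym2 (Fin n) → ℕ) : ℕ :=
  sSup {d : ℕ | ∃ t' : Sym2 (Fin n) → ℕ, IsPSwap n p t t' ∧
    ∃ u v : Fin n, u ≠ v ∧ (d : ℤ) = |labelSum n t' u - labelSum n t' v|}

def Uplus (n p : ℕ) (t : Sym2 (Fin n) → ℕ) (v : Fin n) : Finset (Sym2 (Fin n)) :=
  (incEdges n v).filter fun e => ∃ e' ∈ incEdges n v, t e' = t e + p

def Uminus (n p : ℕ) (t : Sym2 (Fin n) → ℕ) (v : Fin n) : Finset (Sym2 (Fin n)) :=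
  (incEdges n v).filter fun e => ∃ e' ∈ incEdges n v, t e' + p = t e

def badPairsI (n p : ℕ) (t : Sym2 (Fin n) → ℕ) (u v : Fin n) :
    Finset (Sym2 (Sym2 (Fin n))) :=
  Finset.univ.filter fun P => ∃ e₁ e₂ : Sym2 (Fin n), P = s(e₁, e₂) ∧
    ¬ e₁.IsDiag ∧ ¬ e₂.IsDiag ∧ u ∈ e₁ ∧ v ∈ e₂ ∧ ((t e₁ : ℤ) - (t e₂ : ℤ)).natAbs = p

def badPairsII (n p : ℕ) (t : Sym2 (Fin n) → ℕ) (u v : Fin n) :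
    Finset (Sym2 (Sym2 (Fin n))) :=
  Finset.univ.filter fun P => ∃ e₁ e₂ : Sym2 (Fin n), P = s(e₁, e₂) ∧
    ¬ e₁.IsDiag ∧ ¬ e₂.IsDiag ∧ u ∈ e₁ ∧ v ∈ e₂ ∧ ((t e₁ : ℤ) - (t e₂ : ℤ)).natAbs = 2 * p

def badPairs (n p : ℕ) (t : Sym2 (Fin n) → ℕ) (u v : Fin n) :
    Finset (Sym2 (Sym2 (Fin n))) :=
  badPairsI n p t u v ∪ badPairsII n p t u v

def IsAP1 (I : Finset ℕ) : Prop := ∃ a b : ℕ, a ≤ b ∧ I = Finset.Icc a b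

def SetHasType (p m ℓ : ℕ) (S : Finset ℕ) : Prop :=
  ∃ 𝒜 : Finset (Finset ℕ), 𝒜.card ≤ m ∧
    (∀ I ∈ 𝒜, IsAP1 I ∧ I ⊆ S ∧ 2 * p ≤ I.card) ∧
    (𝒜 : Set (Finset ℕ)).PairwiseDisjoint id ∧
    ℓ ≤ ∑ I ∈ 𝒜, I.card

def LabelingHasType (n p m ℓ : ℕ) (t : Sym2 (Fin n) → ℕ) : Prop :=
  ∀ v : Fin n, SetHasType p m ℓ (labelSet n t v)

def AstrayGood (n b : ℕ) (t : Sym2 (Fin n) → ℕ) : Prop :=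
  IsEdgeLabeling n t ∧
  ∃ A : Finset (Sym2 (Fin n)), (∀ e ∈ A, ¬ e.IsDiag) ∧
    A.card % 2 = eps n % 2 ∧
    A.image t = Finset.Icc ((eps n - A.card) / 2 + 1) ((eps n + A.card) / 2) ∧
    ∀ v : Fin n,
      (incEdges n v ∩ A).card ≤ b ∧
      ((incEdges n v).filter fun e => t e ≤ (eps n - A.card) / 2).card
        = ((incEdges n v).filter fun e => (eps n + A.card) / 2 < t e).card ∧
      2 * ∑ e ∈ incEdges n v \ A, t e = (incEdges n v \ A).card * (eps n + 1)

def Admissible (p : ℕ → ℕ) : Prop :=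
  Filter.Tendsto (fun n => (p n : ℝ) / n) Filter.atTop (nhds 0) ∧
  Filter.Tendsto p Filter.atTop Filter.atTop

end
end Swap


open Finset

namespace SwapProofX
open Swap

noncomputable section
open scoped Classical

variable {n p : ℕ} {t : Sym2 (Fin n) → ℕ}

lemma mem_incEdges {v : Fin n} {e : Sym2 (Fin n)} :
    e ∈ incEdges n v ↔ v ∈ e ∧ ¬ e.IsDiag := by
  simp [incEdges]

lemma eq_mk_of_mem {a b : Fin n} {e : Sym2 (Fin n)} (hab : a ≠ b) (ha : a ∈ e) (hb : b ∈ e) :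
    e = s(a, b) := (Sym2.mem_and_mem_iff hab).1 ⟨ha, hb⟩

lemma incEdges_eq_image (v : Fin n) :
    incEdges n v = (Finset.univ.erase v).image fun w => s(v, w) := by
  ext e
  simp only [mem_incEdges, Finset.mem_image, Finset.mem_erase, Finset.mem_univ, and_true]
  constructor
  · rintro ⟨hv, hd⟩
    have he := Sym2.other_spec hv
    refine ⟨Sym2.Mem.other hv, ?_, he⟩
    intro h
    apply hd
    rw [← he, h]
    exact Sym2.mk_isDiag_iff.2 rfl
  · rintro ⟨w, hw, rfl⟩
    exact ⟨Sym2.mem_mk_left v w, by simp [Sym2.mk_isDiag_iff, Ne.symm hw]⟩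

lemma card_incEdges (v : Fin n) : (incEdges n v).card = n - 1 := by
  rw [incEdges_eq_image, Finset.card_image_of_injOn, Finset.card_erase_of_mem (Finset.mem_univ v),
    Finset.card_univ, Fintype.card_fin]
  intro a _ b _ h
  exact Sym2.congr_right.1 h

lemma mem_labelSet {v : Fin n} {x : ℕ} :
    x ∈ labelSet n t v ↔ ∃ e ∈ incEdges n v, t e = x := Finset.mem_image

lemma label_mem_Icc (hL : IsEdgeLabeling n t) {v : Fin n} {e : Sym2 (Fin n)}
    (he : e ∈ incEdges n v) : t e ∈ Finset.Icc 1 (eps n) := by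
  have := hL.mapsTo (mem_incEdges.1 he).2
  simpa [Finset.mem_Icc, Set.mem_Icc] using this

lemma labelSet_subset_Icc (hL : IsEdgeLabeling n t) {v : Fin n} :
    labelSet n t v ⊆ Finset.Icc 1 (eps n) := by
  intro x hx
  obtain ⟨e, he, rfl⟩ := mem_labelSet.1 hx
  exact label_mem_Icc hL he

lemma edge_unique (hL : IsEdgeLabeling n t) {e f : Sym2 (Fin n)} (he : ¬ e.IsDiag)
    (hf : ¬ f.IsDiag) (h : t e = t f) : e = f := hL.injOn he hf h

lemma card_labelSet (hL : IsEdgeLabeling n t) (v : Fin n) :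
    (labelSet n t v).card = n - 1 := by
  rw [labelSet, Finset.card_image_of_injOn, card_incEdges]
  intro e he f hf h
  exact edge_unique hL (mem_incEdges.1 he).2 (mem_incEdges.1 hf).2 h

/-- two distinct labels can live together at most one common vertex -/
lemma vertex_unique (hL : IsEdgeLabeling n t) {x y : ℕ} (hxy : x ≠ y) {a b : Fin n}
    (hax : x ∈ labelSet n t a) (hay : y ∈ labelSet n t a)
    (hbx : x ∈ labelSet n t b) (hby : y ∈ labelSet n t b) : a = b := by
  obtain ⟨e1, he1, he1x⟩ := mem_labelSet.1 hax
  obtain ⟨f1, hf1, hf1y⟩ := mem_labelSet.1 hay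
  obtain ⟨e2, he2, he2x⟩ := mem_labelSet.1 hbx
  obtain ⟨f2, hf2, hf2y⟩ := mem_labelSet.1 hby
  have hee : e1 = e2 := edge_unique hL (mem_incEdges.1 he1).2 (mem_incEdges.1 he2).2
    (he1x.trans he2x.symm)
  have hff : f1 = f2 := edge_unique hL (mem_incEdges.1 hf1).2 (mem_incEdges.1 hf2).2
    (hf1y.trans hf2y.symm)
  by_contra hab
  have hE : e1 = s(a, b) := eq_mk_of_mem hab (mem_incEdges.1 he1).1 (hee ▸ (mem_incEdges.1 he2).1)
  have hF : f1 = s(a, b) := eq_mk_of_mem hab (mem_incEdges.1 hf1).1 (hff ▸ (mem_incEdges.1 hf2).1)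
  apply hxy
  rw [← he1x, ← hf1y, hE, hF]

lemma card_vertices_of_label_le_two (hL : IsEdgeLabeling n t) (y : ℕ) :
    (Finset.univ.filter fun w : Fin n => y ∈ labelSet n t w).card ≤ 2 := by
  by_cases h : ∃ w : Fin n, y ∈ labelSet n t w
  · obtain ⟨w0, hw0⟩ := h
    obtain ⟨e0, he0, he0y⟩ := mem_labelSet.1 hw0
    induction e0 using Sym2.ind with
    | _ a b =>
      refine le_trans (Finset.card_le_card (t := ({a, b} : Finset (Fin n))) (fun w hw => ?_)) ?_
      · obtain ⟨e, he, hey⟩ := mem_labelSet.1 (Finset.mem_filter.1 hw).2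
        have : e = s(a, b) := edge_unique hL (mem_incEdges.1 he).2 (mem_incEdges.1 he0).2
          (hey.trans he0y.symm)
        have hwmem : w ∈ s(a, b) := this ▸ (mem_incEdges.1 he).1
        rw [Sym2.mem_iff] at hwmem
        simp [hwmem]
      · exact Finset.card_insert_le a {b} |>.trans (by simp)
  · push_neg at h
    rw [Finset.filter_false_of_mem (fun w _ => h w), Finset.card_empty]
    omega

end
end SwapProofX

namespace SwapProofX
open Swap

noncomputable section
open scoped Classical

variable {n p : ℕ} {t : Sym2 (Fin n) → ℕ}

def Dp (n p : ℕ) (t : Sym2 (Fin n) → ℕ) (u : Fin n) : ℕ :=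
  ((Finset.Icc 1 (eps n)).filter fun x =>
    x ∈ labelSet n t u ∧ x + p ∈ labelSet n t u).card

def Dm (n p : ℕ) (t : Sym2 (Fin n) → ℕ) (v : Fin n) : ℕ :=
  ((Finset.Icc 1 (eps n)).filter fun y =>
    y ∈ labelSet n t v ∧ p < y ∧ y - p ∈ labelSet n t v).card

def C2 (n p : ℕ) (t : Sym2 (Fin n) → ℕ) (u v : Fin n) : ℕ :=
  ((Finset.Icc 1 (eps n)).filter fun y =>
    y ∈ labelSet n t v ∧ 2 * p < y ∧ y - 2 * p ∈ labelSet n t u).card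

lemma sum_card_filter_comm {A : Finset ℕ} {W : Finset (Fin n)} (P : Fin n → ℕ → Prop) :
    ∑ w ∈ W, ((A.filter (fun x => P w x)).card) = ∑ x ∈ A, ((W.filter (fun w => P w x)).card) := by
  simp_rw [Finset.card_filter]
  exact Finset.sum_comm

lemma sum_Dp_le (hL : IsEdgeLabeling n t) (hp : 1 ≤ p) :
    ∑ w : Fin n, Dp n p t w ≤ eps n := by
  unfold Dp
  simp_rw [Finset.card_filter]
  rw [Finset.sum_comm]
  simp_rw [← Finset.card_filter]
  calc ∑ x ∈ Finset.Icc 1 (eps n),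
        (Finset.univ.filter fun w : Fin n => x ∈ labelSet n t w ∧ x + p ∈ labelSet n t w).card
      ≤ ∑ _x ∈ Finset.Icc 1 (eps n), 1 := by
        refine Finset.sum_le_sum fun x _ => ?_
        refine Finset.card_le_one.2 fun a ha b hb => ?_
        simp only [Finset.mem_filter] at ha hb
        exact vertex_unique hL (by omega : x ≠ x + p) ha.2.1 ha.2.2 hb.2.1 hb.2.2
    _ ≤ eps n := by rw [Finset.sum_const, smul_eq_mul, mul_one, Nat.card_Icc]; omega

lemma sum_Dm_le (hL : IsEdgeLabeling n t) (hp : 1 ≤ p) :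
    ∑ w : Fin n, Dm n p t w ≤ eps n := by
  unfold Dm
  simp_rw [Finset.card_filter]
  rw [Finset.sum_comm]
  simp_rw [← Finset.card_filter]
  calc ∑ y ∈ Finset.Icc 1 (eps n),
        (Finset.univ.filter fun w : Fin n =>
          y ∈ labelSet n t w ∧ p < y ∧ y - p ∈ labelSet n t w).card
      ≤ ∑ _y ∈ Finset.Icc 1 (eps n), 1 := by
        refine Finset.sum_le_sum fun y _ => ?_
        refine Finset.card_le_one.2 fun a ha b hb => ?_
        simp only [Finset.mem_filter] at ha hb
        exact vertex_unique hL (by omega : y - p ≠ y) ha.2.2.2 ha.2.1 hb.2.2.2 hb.2.1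
    _ ≤ eps n := by rw [Finset.sum_const, smul_eq_mul, mul_one, Nat.card_Icc]; omega

lemma sum_C2_le (hL : IsEdgeLabeling n t) (u : Fin n) :
    ∑ w ∈ Finset.univ.erase u, C2 n p t u w ≤ 2 * (n - 1) := by
  unfold C2
  simp_rw [Finset.card_filter]
  rw [Finset.sum_comm]
  simp_rw [← Finset.card_filter]
  have h1 : ∀ y ∈ Finset.Icc 1 (eps n),
      ((Finset.univ.erase u).filter fun w : Fin n =>
        y ∈ labelSet n t w ∧ 2 * p < y ∧ y - 2 * p ∈ labelSet n t u).card
      ≤ if 2 * p < y ∧ y - 2 * p ∈ labelSet n t u then 2 else 0 := by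
    intro y _
    by_cases hQ : 2 * p < y ∧ y - 2 * p ∈ labelSet n t u
    · rw [if_pos hQ]
      refine le_trans (Finset.card_le_card ?_) (card_vertices_of_label_le_two hL y)
      intro w hw
      simp only [Finset.mem_filter, Finset.mem_erase] at hw ⊢
      exact ⟨Finset.mem_univ w, hw.2.1⟩
    · rw [if_neg hQ]
      have h0 : ((Finset.univ.erase u).filter fun w : Fin n =>
          y ∈ labelSet n t w ∧ 2 * p < y ∧ y - 2 * p ∈ labelSet n t u) = ∅ :=
        Finset.filter_false_of_mem fun w _ hcon => hQ ⟨hcon.2.1, hcon.2.2⟩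
      rw [h0, Finset.card_empty]
  calc _ ≤ ∑ y ∈ Finset.Icc 1 (eps n),
        (if 2 * p < y ∧ y - 2 * p ∈ labelSet n t u then 2 else 0) := Finset.sum_le_sum h1
    _ = 2 * ((Finset.Icc 1 (eps n)).filter
          fun y => 2 * p < y ∧ y - 2 * p ∈ labelSet n t u).card := by
        rw [← Finset.sum_filter, Finset.sum_const, smul_eq_mul, mul_comm]
    _ ≤ 2 * (n - 1) := by
        have : ((Finset.Icc 1 (eps n)).filter
            fun y => 2 * p < y ∧ y - 2 * p ∈ labelSet n t u).card ≤ (labelSet n t u).card := by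
          refine Finset.card_le_card_of_injOn (fun y => y - 2 * p) ?_ ?_
          · intro y hy
            exact (Finset.mem_filter.1 hy).2.2
          · intro y hy z hz h
            simp only [Finset.coe_filter, Set.mem_setOf_eq] at hy hz
            have h' : y - 2 * p = z - 2 * p := h
            have hy2 : 2 * p < y := hy.2.1
            have hz2 : 2 * p < z := hz.2.1
            omega
        rw [card_labelSet hL u] at this
        omega

lemma exists_good_pair (hn : 2 ≤ n) (hp : 1 ≤ p) (hL : IsEdgeLabeling n t) :
    ∃ u v : Fin n, u ≠ v ∧ 2 * Dp n p t u ≤ n - 1 ∧ 2 * (Dm n p t v + C2 n p t u v) ≤ n + 4 := by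
  have hne : (Finset.univ : Finset (Fin n)).Nonempty := ⟨⟨0, by omega⟩, Finset.mem_univ _⟩
  obtain ⟨u, -, hu⟩ := Finset.exists_min_image Finset.univ (Dp n p t) hne
  have hne2 : (Finset.univ.erase u).Nonempty := by
    rw [← Finset.card_pos, Finset.card_erase_of_mem (Finset.mem_univ u), Finset.card_univ,
      Fintype.card_fin]
    omega
  obtain ⟨v, hv, hvmin⟩ := Finset.exists_min_image (Finset.univ.erase u)
    (fun w => Dm n p t w + C2 n p t u w) hne2
  have huv : u ≠ v := fun h => (Finset.mem_erase.1 hv).1 h.symm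
  refine ⟨u, v, huv, ?_, ?_⟩
  · have hmin1 : n * Dp n p t u ≤ eps n := by
      calc n * Dp n p t u = (Finset.univ : Finset (Fin n)).card • Dp n p t u := by
            rw [Finset.card_univ, Fintype.card_fin, smul_eq_mul]
        _ ≤ ∑ w : Fin n, Dp n p t w := Finset.card_nsmul_le_sum _ _ _ (fun w hw => hu w hw)
        _ ≤ eps n := sum_Dp_le hL hp
    have haux : eps n * 2 ≤ n * (n - 1) := by
      show n * (n - 1) / 2 * 2 ≤ n * (n - 1)
      exact Nat.div_mul_le_self _ 2
    have h1 : n * (2 * Dp n p t u) ≤ n * (n - 1) := by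
      calc n * (2 * Dp n p t u) = 2 * (n * Dp n p t u) := by ring
        _ ≤ n * (n - 1) := by omega
    exact Nat.le_of_mul_le_mul_left h1 (by omega)
  · have hmin2 : (n - 1) * (Dm n p t v + C2 n p t u v) ≤ eps n + 2 * (n - 1) := by
      have hc : (Finset.univ.erase u).card = n - 1 := by
        rw [Finset.card_erase_of_mem (Finset.mem_univ u), Finset.card_univ, Fintype.card_fin]
      calc (n - 1) * (Dm n p t v + C2 n p t u v)
          = (Finset.univ.erase u).card • (Dm n p t v + C2 n p t u v) := by
            rw [hc, smul_eq_mul]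
        _ ≤ ∑ w ∈ Finset.univ.erase u, (Dm n p t w + C2 n p t u w) :=
            Finset.card_nsmul_le_sum _ _ _ (fun w hw => hvmin w hw)
        _ = (∑ w ∈ Finset.univ.erase u, Dm n p t w) + ∑ w ∈ Finset.univ.erase u, C2 n p t u w :=
            Finset.sum_add_distrib
        _ ≤ eps n + 2 * (n - 1) := by
            have h1 : ∑ w ∈ Finset.univ.erase u, Dm n p t w ≤ ∑ w : Fin n, Dm n p t w :=
              Finset.sum_le_sum_of_subset (Finset.erase_subset _ _)
            have h2 := sum_Dm_le hL hp
            have h3 := sum_C2_le hL (p := p) u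
            omega
    have haux : eps n * 2 ≤ n * (n - 1) := by
      show n * (n - 1) / 2 * 2 ≤ n * (n - 1)
      exact Nat.div_mul_le_self _ 2
    have h1 : (n - 1) * (2 * (Dm n p t v + C2 n p t u v)) ≤ (n - 1) * (n + 4) := by
      calc (n - 1) * (2 * (Dm n p t v + C2 n p t u v))
          = 2 * ((n - 1) * (Dm n p t v + C2 n p t u v)) := by ring
        _ ≤ 2 * (eps n + 2 * (n - 1)) := by omega
        _ ≤ (n - 1) * (n + 4) := by nlinarith [haux]
    exact Nat.le_of_mul_le_mul_left ((mul_comm _ _).trans_le (le_of_eq_of_le (mul_comm _ _) h1) ) (by omega : 0 < n - 1)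

end
end SwapProofX

namespace SwapProofX
open Swap

noncomputable section
open scoped Classical

variable {n p : ℕ} {t : Sym2 (Fin n) → ℕ}

lemma exists_swap (hp : 1 ≤ p) (hL : IsEdgeLabeling n t) {u v : Fin n} (huv : u ≠ v) :
    ∃ (t' : Sym2 (Fin n) → ℕ) (a b : ℕ),
      IsPSwap n p t t' ∧
      n - 1 ≤ a + 1 + p + Dp n p t u ∧
      n - 1 ≤ b + 1 + p + (Dm n p t v + C2 n p t u v) ∧
      labelSum n t u - labelSum n t v + (p : ℤ) * ((a : ℤ) + (b : ℤ))
        ≤ labelSum n t' u - labelSum n t' v := by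
  classical
  set ε := eps n with hε
  set Su := labelSet n t u with hSu
  set Sv := labelSet n t v with hSv
  set c := t s(u, v) with hc
  set U : Finset ℕ := (Finset.Icc 1 ε).filter
    (fun x => x ∈ Su ∧ x ≠ c ∧ x + p ≤ ε ∧ x + p ∉ Su) with hU
  set V : Finset ℕ := (Finset.Icc 1 ε).filter
    (fun y => y ∈ Sv ∧ y ≠ c ∧ p < y ∧ y - p ∉ Sv ∧ ¬(2 * p < y ∧ y - 2 * p ∈ U)) with hV
  set B : Finset ℕ := U ∪ V.image (fun y => y - p) with hB
  set Bp : Finset ℕ := B.image (fun z => z + p) with hBp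
  have hUmem : ∀ x ∈ U, (1 ≤ x ∧ x ≤ ε) ∧ x ∈ Su ∧ x ≠ c ∧ x + p ≤ ε ∧ x + p ∉ Su := by
    intro x hx
    have h := Finset.mem_filter.1 hx
    exact ⟨Finset.mem_Icc.1 h.1, h.2⟩
  have hVmem : ∀ y ∈ V, (1 ≤ y ∧ y ≤ ε) ∧ y ∈ Sv ∧ y ≠ c ∧ p < y ∧ y - p ∉ Sv ∧
      ¬(2 * p < y ∧ y - 2 * p ∈ U) := by
    intro y hy
    have h := Finset.mem_filter.1 hy
    exact ⟨Finset.mem_Icc.1 h.1, h.2⟩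
  have hSuv : ∀ x, x ∈ Su → x ∈ Sv → x = c := by
    intro x hxu hxv
    obtain ⟨e, he, hex⟩ := mem_labelSet.1 hxu
    obtain ⟨f, hf, hfx⟩ := mem_labelSet.1 hxv
    have hef : e = f := edge_unique hL (mem_incEdges.1 he).2 (mem_incEdges.1 hf).2
      (hex.trans hfx.symm)
    have heuv : e = s(u, v) := eq_mk_of_mem huv (mem_incEdges.1 he).1 (hef ▸ (mem_incEdges.1 hf).1)
    rw [← hex, heuv]
  have hB1 : ∀ b ∈ B, 1 ≤ b ∧ b + p ≤ ε := by
    intro b hb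
    rcases Finset.mem_union.1 hb with h | h
    · have h2 := hUmem b h
      exact ⟨h2.1.1, h2.2.2.2.1⟩
    · obtain ⟨y, hy, rfl⟩ := Finset.mem_image.1 h
      have h2 := hVmem y hy
      have h3 : p < y := h2.2.2.2.1
      have h4 : y ≤ ε := h2.1.2
      exact ⟨by omega, by omega⟩
  have hBnotp : ∀ b ∈ B, b + p ∉ B := by
    intro b hb hbp
    rcases Finset.mem_union.1 hb with hU1 | hV1
    · rcases Finset.mem_union.1 hbp with h1 | h2
      · exact (hUmem b hU1).2.2.2.2 (hUmem _ h1).2.1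
      · obtain ⟨y, hy, hyeq⟩ := Finset.mem_image.1 h2
        have hym := hVmem y hy
        have hy1 : p < y := hym.2.2.2.1
        have hb1 : 1 ≤ b := (hUmem b hU1).1.1
        refine hym.2.2.2.2.2 ⟨by omega, ?_⟩
        have h5 : y - 2 * p = b := by omega
        rw [h5]; exact hU1
    · obtain ⟨y, hy, rfl⟩ := Finset.mem_image.1 hV1
      have hym := hVmem y hy
      have hyy : y - p + p = y := by have := hym.2.2.2.1; omega
      rw [hyy] at hbp
      rcases Finset.mem_union.1 hbp with h1 | h2
      · exact hym.2.2.1 (hSuv y (hUmem y h1).2.1 hym.2.1)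
      · obtain ⟨y', hy', hy'eq⟩ := Finset.mem_image.1 h2
        have hym' := hVmem y' hy'
        have h6 : y' - p = y := hy'eq
        exact hym'.2.2.2.2.1 (h6 ▸ hym.2.1)
  have hSuBp : ∀ x ∈ Su, x ∉ Bp := by
    intro x hx hxBp
    obtain ⟨b, hb, rfl⟩ := Finset.mem_image.1 hxBp
    rcases Finset.mem_union.1 hb with h1 | h2
    · exact (hUmem b h1).2.2.2.2 hx
    · obtain ⟨y, hy, rfl⟩ := Finset.mem_image.1 h2
      have hym := hVmem y hy
      have hyy : y - p + p = y := by have := hym.2.2.2.1; omega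
      rw [hyy] at hx
      exact hym.2.2.1 (hSuv y hx hym.2.1)
  have hSvB : ∀ x ∈ Sv, x ∉ B := by
    intro x hx hxB
    rcases Finset.mem_union.1 hxB with h1 | h2
    · exact (hUmem x h1).2.2.1 (hSuv x (hUmem x h1).2.1 hx)
    · obtain ⟨y, hy, rfl⟩ := Finset.mem_image.1 h2
      exact (hVmem y hy).2.2.2.2.1 hx
  have hVBp : ∀ y ∈ V, y ∈ Bp := by
    intro y hy
    have hym := hVmem y hy
    refine Finset.mem_image.2 ⟨y - p, Finset.mem_union_right _ (Finset.mem_image_of_mem _ hy), ?_⟩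
    have := hym.2.2.2.1; omega
  have hBpmem : ∀ z ∈ Bp, p ≤ z ∧ z - p ∈ B ∧ 1 ≤ z - p ∧ z ≤ ε := by
    intro z hz
    obtain ⟨b, hb, rfl⟩ := Finset.mem_image.1 hz
    have h1 := hB1 b hb
    have h2 : b + p - p = b := by omega
    exact ⟨by omega, by rw [h2]; exact hb, by omega, by omega⟩
  set σ : ℕ → ℕ := fun z => if z ∈ B then z + p else if z ∈ Bp then z - p else z with hσ
  have hσB : ∀ z ∈ B, σ z = z + p := fun z hz => by simp only [hσ, if_pos hz]
  have hBBp : ∀ z ∈ B, z ∉ Bp := by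
    intro z hz hzp
    have h := hBpmem z hzp
    have h2 : z - p + p = z := by omega
    exact (h2 ▸ hBnotp (z - p) h.2.1) hz
  have hσBp : ∀ z ∈ Bp, σ z = z - p := by
    intro z hz
    have hzB : z ∉ B := fun hzB => hBBp z hzB hz
    simp only [hσ, if_neg hzB, if_pos hz]
  have hσid : ∀ z, z ∉ B → z ∉ Bp → σ z = z := by
    intro z h1 h2
    simp only [hσ, if_neg h1, if_neg h2]
  have hσinv : Function.Involutive σ := by
    intro z
    by_cases h1 : z ∈ B
    · rw [hσB z h1]
      have hmem : z + p ∈ Bp := Finset.mem_image_of_mem _ h1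
      rw [hσBp _ hmem]
      omega
    · by_cases h2 : z ∈ Bp
      · rw [hσBp z h2]
        have h := hBpmem z h2
        rw [hσB _ h.2.1]
        omega
      · rw [hσid z h1 h2, hσid z h1 h2]
  have hσIcc : Set.MapsTo σ (Set.Icc 1 ε) (Set.Icc 1 ε) := by
    intro z hz
    simp only [Set.mem_Icc] at hz ⊢
    by_cases h1 : z ∈ B
    · rw [hσB z h1]
      have h := hB1 z h1
      omega
    · by_cases h2 : z ∈ Bp
      · rw [hσBp z h2]
        have h := hBpmem z h2
        omega
      · rw [hσid z h1 h2]; omega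
  have hσbij : Set.BijOn σ (Set.Icc 1 ε) (Set.Icc 1 ε) :=
    ⟨hσIcc, hσinv.injective.injOn, fun y hy => ⟨σ y, hσIcc hy, hσinv y⟩⟩
  set t' : Sym2 (Fin n) → ℕ := fun e => σ (t e) with ht'
  have hps : IsPSwap n p t t' := by
    constructor
    · exact hσbij.comp hL
    · intro e he
      by_cases h1 : t e ∈ B
      · rw [show t' e = t e + p from hσB _ h1]
        have h2 : ((t e + p : ℕ) : ℤ) - (t e : ℤ) = (p : ℤ) := by push_cast; ring
        rw [h2, abs_of_nonneg (by positivity)]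
      · by_cases h2 : t e ∈ Bp
        · have h3 := hBpmem _ h2
          have h4 : ((t e - p : ℕ) : ℤ) - (t e : ℤ) = -(p : ℤ) := by
            rw [Nat.cast_sub h3.1]; ring
          rw [show t' e = t e - p from hσBp _ h2, h4, abs_neg, abs_of_nonneg (by positivity)]
        · rw [show t' e = t e from hσid _ h1 h2]
          simp
  have key_u : labelSum n t' u = labelSum n t u
      + (p : ℤ) * ((incEdges n u).filter (fun e => t e ∈ B)).card := by
    have hsplit1 := Finset.sum_filter_add_sum_filter_not (incEdges n u) (fun e => t e ∈ B)
      (fun e => (t' e : ℤ))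
    have hsplit2 := Finset.sum_filter_add_sum_filter_not (incEdges n u) (fun e => t e ∈ B)
      (fun e => (t e : ℤ))
    have h1 : ∑ e ∈ (incEdges n u).filter (fun e => t e ∈ B), (t' e : ℤ)
        = (∑ e ∈ (incEdges n u).filter (fun e => t e ∈ B), (t e : ℤ))
          + (p : ℤ) * ((incEdges n u).filter (fun e => t e ∈ B)).card := by
      have hcong : ∀ e ∈ (incEdges n u).filter (fun e => t e ∈ B),
          (t' e : ℤ) = (t e : ℤ) + (p : ℤ) := by
        intro e he
        rw [show t' e = t e + p from hσB _ (Finset.mem_filter.1 he).2]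
        push_cast; ring
      rw [Finset.sum_congr rfl hcong, Finset.sum_add_distrib, Finset.sum_const, nsmul_eq_mul]
      ring
    have h2 : ∑ e ∈ (incEdges n u).filter (fun e => ¬ t e ∈ B), (t' e : ℤ)
        = ∑ e ∈ (incEdges n u).filter (fun e => ¬ t e ∈ B), (t e : ℤ) := by
      refine Finset.sum_congr rfl fun e he => ?_
      have hmem := Finset.mem_filter.1 he
      have hSue : t e ∈ Su := Finset.mem_image_of_mem t hmem.1
      rw [show t' e = t e from hσid _ hmem.2 (hSuBp _ hSue)]
    unfold labelSum
    rw [← hsplit1, ← hsplit2, h1, h2]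
    ring
  have key_v : labelSum n t' v = labelSum n t v
      - (p : ℤ) * ((incEdges n v).filter (fun e => t e ∈ Bp)).card := by
    have hsplit1 := Finset.sum_filter_add_sum_filter_not (incEdges n v) (fun e => t e ∈ Bp)
      (fun e => (t' e : ℤ))
    have hsplit2 := Finset.sum_filter_add_sum_filter_not (incEdges n v) (fun e => t e ∈ Bp)
      (fun e => (t e : ℤ))
    have h1 : ∑ e ∈ (incEdges n v).filter (fun e => t e ∈ Bp), (t' e : ℤ)
        = (∑ e ∈ (incEdges n v).filter (fun e => t e ∈ Bp), (t e : ℤ))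
          - (p : ℤ) * ((incEdges n v).filter (fun e => t e ∈ Bp)).card := by
      have hcong : ∀ e ∈ (incEdges n v).filter (fun e => t e ∈ Bp),
          (t' e : ℤ) = (t e : ℤ) - (p : ℤ) := by
        intro e he
        have h3 := hBpmem _ (Finset.mem_filter.1 he).2
        rw [show t' e = t e - p from hσBp _ (Finset.mem_filter.1 he).2, Nat.cast_sub h3.1]
      rw [Finset.sum_congr rfl hcong, Finset.sum_sub_distrib, Finset.sum_const, nsmul_eq_mul]
      ring
    have h2 : ∑ e ∈ (incEdges n v).filter (fun e => ¬ t e ∈ Bp), (t' e : ℤ)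
        = ∑ e ∈ (incEdges n v).filter (fun e => ¬ t e ∈ Bp), (t e : ℤ) := by
      refine Finset.sum_congr rfl fun e he => ?_
      have hmem := Finset.mem_filter.1 he
      have hSve : t e ∈ Sv := Finset.mem_image_of_mem t hmem.1
      rw [show t' e = t e from hσid _ (hSvB _ hSve) hmem.2]
    unfold labelSum
    rw [← hsplit1, ← hsplit2, h1, h2]
    ring
  have hUcard : U.card ≤ ((incEdges n u).filter (fun e => t e ∈ B)).card := by
    have hsub : U ⊆ ((incEdges n u).filter (fun e => t e ∈ B)).image t := by
      intro x hx
      obtain ⟨e, he, hex⟩ := mem_labelSet.1 (hUmem x hx).2.1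
      refine Finset.mem_image.2 ⟨e, Finset.mem_filter.2 ⟨he, ?_⟩, hex⟩
      rw [hex]; exact Finset.mem_union_left _ hx
    calc U.card ≤ (((incEdges n u).filter (fun e => t e ∈ B)).image t).card :=
          Finset.card_le_card hsub
      _ ≤ _ := Finset.card_image_le
  have hVcard : V.card ≤ ((incEdges n v).filter (fun e => t e ∈ Bp)).card := by
    have hsub : V ⊆ ((incEdges n v).filter (fun e => t e ∈ Bp)).image t := by
      intro y hy
      obtain ⟨e, he, hey⟩ := mem_labelSet.1 (hVmem y hy).2.1
      refine Finset.mem_image.2 ⟨e, Finset.mem_filter.2 ⟨he, ?_⟩, hey⟩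
      rw [hey]; exact hVBp y hy
    calc V.card ≤ (((incEdges n v).filter (fun e => t e ∈ Bp)).image t).card :=
          Finset.card_le_card hsub
      _ ≤ _ := Finset.card_image_le
  -- covering bound for u
  have hacard : n - 1 ≤ U.card + 1 + p + Dp n p t u := by
    set F : Finset ℕ := (Finset.Icc 1 ε).filter (fun x => x ∈ Su ∧ x + p ∈ Su) with hF
    have hFD : F.card = Dp n p t u := rfl
    have hcov : Su ⊆ U ∪ ({c} ∪ (Finset.Ioc (ε - p) ε ∪ F)) := by
      intro x hx
      have hxI : x ∈ Finset.Icc 1 ε := labelSet_subset_Icc hL hx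
      by_cases hxU : x ∈ U
      · exact Finset.mem_union_left _ hxU
      · refine Finset.mem_union_right _ ?_
        by_cases h1 : x = c
        · exact Finset.mem_union_left _ (by simp [h1])
        · by_cases h2 : x + p ≤ ε
          · by_cases h3 : x + p ∈ Su
            · exact Finset.mem_union_right _ (Finset.mem_union_right _
                (Finset.mem_filter.2 ⟨hxI, hx, h3⟩))
            · exact absurd (Finset.mem_filter.2 ⟨hxI, hx, h1, h2, h3⟩) hxU
          · refine Finset.mem_union_right _ (Finset.mem_union_left _ ?_)
            have h4 := Finset.mem_Icc.1 hxI
            exact Finset.mem_Ioc.2 ⟨by omega, h4.2⟩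
    have h1 := Finset.card_le_card hcov
    have h2 := Finset.card_union_le U ({c} ∪ (Finset.Ioc (ε - p) ε ∪ F))
    have h3 := Finset.card_union_le ({c} : Finset ℕ) (Finset.Ioc (ε - p) ε ∪ F)
    have h4 := Finset.card_union_le (Finset.Ioc (ε - p) ε) F
    have h5 : (Finset.Ioc (ε - p) ε).card ≤ p := by rw [Nat.card_Ioc]; omega
    have h6 : ({c} : Finset ℕ).card = 1 := Finset.card_singleton c
    have h7 : Su.card = n - 1 := card_labelSet hL u
    omega
  -- covering bound for v
  have hbcard : n - 1 ≤ V.card + 1 + p + (Dm n p t v + C2 n p t u v) := by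
    set F2 : Finset ℕ := (Finset.Icc 1 ε).filter (fun y => y ∈ Sv ∧ p < y ∧ y - p ∈ Sv) with hF2
    set F3 : Finset ℕ := (Finset.Icc 1 ε).filter
      (fun y => y ∈ Sv ∧ 2 * p < y ∧ y - 2 * p ∈ Su) with hF3
    have hFD2 : F2.card = Dm n p t v := rfl
    have hFD3 : F3.card = C2 n p t u v := rfl
    have hcov : Sv ⊆ V ∪ ({c} ∪ (Finset.Icc 1 p ∪ (F2 ∪ F3))) := by
      intro x hx
      have hxI : x ∈ Finset.Icc 1 ε := labelSet_subset_Icc hL hx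
      by_cases hxV : x ∈ V
      · exact Finset.mem_union_left _ hxV
      · refine Finset.mem_union_right _ ?_
        by_cases h1 : x = c
        · exact Finset.mem_union_left _ (by simp [h1])
        · refine Finset.mem_union_right _ ?_
          by_cases h2 : p < x
          · refine Finset.mem_union_right _ ?_
            by_cases h3 : x - p ∈ Sv
            · exact Finset.mem_union_left _ (Finset.mem_filter.2 ⟨hxI, hx, h2, h3⟩)
            · have h4 : 2 * p < x ∧ x - 2 * p ∈ U := by
                by_contra h4
                exact hxV (Finset.mem_filter.2 ⟨hxI, hx, h1, h2, h3, h4⟩)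
              exact Finset.mem_union_right _
                (Finset.mem_filter.2 ⟨hxI, hx, h4.1, (hUmem _ h4.2).2.1⟩)
          · refine Finset.mem_union_left _ ?_
            have h5 := Finset.mem_Icc.1 hxI
            exact Finset.mem_Icc.2 ⟨h5.1, by omega⟩
    have h1 := Finset.card_le_card hcov
    have h2 := Finset.card_union_le V ({c} ∪ (Finset.Icc 1 p ∪ (F2 ∪ F3)))
    have h3 := Finset.card_union_le ({c} : Finset ℕ) (Finset.Icc 1 p ∪ (F2 ∪ F3))
    have h4 := Finset.card_union_le (Finset.Icc 1 p) (F2 ∪ F3)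
    have h8 := Finset.card_union_le F2 F3
    have h5 : (Finset.Icc 1 p).card = p := by rw [Nat.card_Icc]; omega
    have h6 : ({c} : Finset ℕ).card = 1 := Finset.card_singleton c
    have h7 : Sv.card = n - 1 := card_labelSet hL v
    omega
  refine ⟨t', U.card, V.card, hps, hacard, hbcard, ?_⟩
  rw [key_u, key_v]
  have hp0 : (0 : ℤ) ≤ (p : ℤ) := by positivity
  have h1 : (U.card : ℤ) ≤ (((incEdges n u).filter (fun e => t e ∈ B)).card : ℤ) :=
    Nat.cast_le.2 hUcard
  have h2 : (V.card : ℤ) ≤ (((incEdges n v).filter (fun e => t e ∈ Bp)).card : ℤ) :=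
    Nat.cast_le.2 hVcard
  have h3 := mul_le_mul_of_nonneg_left h1 hp0
  have h4 := mul_le_mul_of_nonneg_left h2 hp0
  linarith

end
end SwapProofX

theorem stmt0 (n p α : ℕ) (hn : 2 ≤ n) (hp : 1 ≤ p)
    (t : Sym2 (Fin n) → ℕ) (ht : Swap.AlmostSupermagic n α t) :
    ((n : ℤ) - 2 * p - 19) * p - α ≤ (Swap.robustness n p t : ℤ) ∧
      (Swap.robustness n p t : ℤ) ≤ (2 * n - 4) * p + α := by
  classical
  obtain ⟨hL, hα⟩ := ht
  set S : Set ℕ := {d : ℕ | ∃ t' : Sym2 (Fin n) → ℕ, Swap.IsPSwap n p t t' ∧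
    ∃ u v : Fin n, u ≠ v ∧ (d : ℤ) = |Swap.labelSum n t' u - Swap.labelSum n t' v|} with hS
  have hrob : Swap.robustness n p t = sSup S := rfl
  have hub : ∀ d ∈ S, (d : ℤ) ≤ (2 * (n : ℤ) - 4) * p + α := by
    rintro d ⟨t', hps, u, v, huv, hd⟩
    rw [hd]
    have heu : s(u, v) ∈ Swap.incEdges n u := SwapProofX.mem_incEdges.2
      ⟨Sym2.mem_mk_left u v, by simp [Sym2.mk_isDiag_iff, huv]⟩
    have hev : s(u, v) ∈ Swap.incEdges n v := SwapProofX.mem_incEdges.2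
      ⟨Sym2.mem_mk_right u v, by simp [Sym2.mk_isDiag_iff, huv]⟩
    have h1 : ∀ w : Fin n, s(u, v) ∈ Swap.incEdges n w →
        Swap.labelSum n t' w - Swap.labelSum n t w
          = ((t' s(u, v) : ℤ) - t s(u, v))
            + ∑ e ∈ (Swap.incEdges n w).erase s(u, v), ((t' e : ℤ) - t e) := by
      intro w hw
      have h2 : Swap.labelSum n t' w - Swap.labelSum n t w
          = ∑ e ∈ Swap.incEdges n w, ((t' e : ℤ) - t e) := by
        unfold Swap.labelSum; rw [Finset.sum_sub_distrib]
      rw [h2, ← Finset.sum_erase_add _ _ hw]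
      ring
    have hbnd : ∀ w : Fin n, s(u, v) ∈ Swap.incEdges n w →
        |∑ e ∈ (Swap.incEdges n w).erase s(u, v), ((t' e : ℤ) - t e)| ≤ ((n : ℤ) - 2) * p := by
      intro w hw
      calc |∑ e ∈ (Swap.incEdges n w).erase s(u, v), ((t' e : ℤ) - t e)|
          ≤ ∑ e ∈ (Swap.incEdges n w).erase s(u, v), |((t' e : ℤ) - t e)| :=
            Finset.abs_sum_le_sum_abs _ _
        _ ≤ ((Swap.incEdges n w).erase s(u, v)).card • (p : ℤ) := Finset.sum_le_card_nsmul _ _ _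
            (fun e he => hps.2 e (SwapProofX.mem_incEdges.1 (Finset.mem_of_mem_erase he)).2)
        _ ≤ ((n : ℤ) - 2) * p := by
            rw [nsmul_eq_mul]
            have h5 := Finset.card_erase_of_mem hw
            rw [SwapProofX.card_incEdges] at h5
            have hc : (((Swap.incEdges n w).erase s(u, v)).card : ℤ) ≤ (n : ℤ) - 2 := by omega
            exact mul_le_mul_of_nonneg_right hc (by positivity)
    have hu' := h1 u heu
    have hv' := h1 v hev
    have h9 := hbnd u heu
    have h10 := hbnd v hev
    have h8 := hα u v
    have habs1 := abs_sub (∑ e ∈ (Swap.incEdges n u).erase s(u, v), ((t' e : ℤ) - t e))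
      (∑ e ∈ (Swap.incEdges n v).erase s(u, v), ((t' e : ℤ) - t e))
    have hdec : Swap.labelSum n t' u - Swap.labelSum n t' v
        = (Swap.labelSum n t u - Swap.labelSum n t v)
          + ((∑ e ∈ (Swap.incEdges n u).erase s(u, v), ((t' e : ℤ) - t e))
            - (∑ e ∈ (Swap.incEdges n v).erase s(u, v), ((t' e : ℤ) - t e))) := by
      linarith
    rw [hdec]
    have habs2 := abs_add_le (Swap.labelSum n t u - Swap.labelSum n t v)
      ((∑ e ∈ (Swap.incEdges n u).erase s(u, v), ((t' e : ℤ) - t e))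
        - (∑ e ∈ (Swap.incEdges n v).erase s(u, v), ((t' e : ℤ) - t e)))
    have hexp : (2 * (n : ℤ) - 4) * p = ((n : ℤ) - 2) * p + ((n : ℤ) - 2) * p := by ring
    linarith
  have hubN : ∀ d ∈ S, d ≤ 2 * (n - 2) * p + α := by
    intro d hd
    have h1 := hub d hd
    have hcast : ((2 * (n - 2) * p + α : ℕ) : ℤ) = (2 * (n : ℤ) - 4) * p + α := by
      push_cast [Nat.cast_sub hn]
      ring
    have : (d : ℤ) ≤ ((2 * (n - 2) * p + α : ℕ) : ℤ) := by rw [hcast]; exact h1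
    exact_mod_cast this
  have hBdd : BddAbove S := ⟨2 * (n - 2) * p + α, fun d hd => hubN d hd⟩
  constructor
  · obtain ⟨u, v, huv, hDp2, hDmC2⟩ := SwapProofX.exists_good_pair hn hp hL
    obtain ⟨t', a, b, hps, ha, hb, hsum⟩ := SwapProofX.exists_swap hp hL huv
    have hmem : (Swap.labelSum n t' u - Swap.labelSum n t' v).natAbs ∈ S :=
      ⟨t', hps, u, v, huv, (Int.abs_eq_natAbs _).symm⟩
    have hle : ((Swap.labelSum n t' u - Swap.labelSum n t' v).natAbs : ℤ)
        ≤ (Swap.robustness n p t : ℤ) := Nat.cast_le.2 (le_csSup hBdd hmem)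
    have habs : Swap.labelSum n t' u - Swap.labelSum n t' v
        ≤ ((Swap.labelSum n t' u - Swap.labelSum n t' v).natAbs : ℤ) := by
      rw [← Int.abs_eq_natAbs]; exact le_abs_self _
    have hαuv : -(α : ℤ) ≤ Swap.labelSum n t u - Swap.labelSum n t v := (abs_le.1 (hα u v)).1
    have hab : ((n : ℤ) - 2 * p - 19) ≤ (a : ℤ) + (b : ℤ) := by omega
    have hmul : ((n : ℤ) - 2 * p - 19) * p ≤ (p : ℤ) * ((a : ℤ) + (b : ℤ)) := by
      calc ((n : ℤ) - 2 * p - 19) * p = (p : ℤ) * ((n : ℤ) - 2 * p - 19) := by ring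
        _ ≤ (p : ℤ) * ((a : ℤ) + (b : ℤ)) :=
          mul_le_mul_of_nonneg_left hab (by positivity)
    linarith
  · have h1 : Swap.robustness n p t ≤ 2 * (n - 2) * p + α :=
      csSup_le' (fun d hd => hubN d hd)
    have h2 : ((Swap.robustness n p t : ℕ) : ℤ) ≤ ((2 * (n - 2) * p + α : ℕ) : ℤ) :=
      Nat.cast_le.2 h1
    have hcast : ((2 * (n - 2) * p + α : ℕ) : ℤ) = (2 * (n : ℤ) - 4) * p + α := by
      push_cast [Nat.cast_sub hn]
      ring
    rw [hcast] at h2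
    exact h2
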